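/- Let p be an odd prime. Every unit of ℤ[ζ_p] can be written in the form ζ_p^j · u for some integer j with 0 ≤ j < p and some unit u of the real subring ℤ[ζ_p + ζ_p^{-1}]. -/

import Mathlib

noncomputable section

/-- The subring `ℤ[ζ]` of `ℂ` generated by `ζ`. -/
def zRing (ζ : ℂ) : Subring ℂ := Subring.closure {ζ}

/-- The subring `ℤ[ζ + ζ⁻¹]` of `ℂ`. -/
def zRealRing (ζ : ℂ) : Subring ℂ := Subring.closure {ζ + ζ⁻¹}

namespace KummerAux

open Complex Polynomial

variable {p : ℕ} {ζ : ℂ}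

lemma abs_zeta (hp : 0 < p) (hζp : ζ ^ p = 1) : ‖ζ‖ = 1 := by
  have h1 : ‖ζ‖ ^ p = 1 := by rw [← norm_pow, hζp, norm_one]
  have h0 : 0 ≤ ‖ζ‖ := norm_nonneg ζ
  rcases lt_trichotomy ‖ζ‖ 1 with h | h | h
  · have := pow_lt_one₀ h0 h hp.ne'
    rw [h1] at this; exact absurd this (lt_irrefl _)
  · exact h
  · have := one_lt_pow₀ h hp.ne'
    rw [h1] at this; exact absurd this (lt_irrefl _)

lemma zeta_ne_zero (hp : 0 < p) (hζp : ζ ^ p = 1) : ζ ≠ 0 := by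
  rintro rfl
  rw [zero_pow hp.ne'] at hζp
  exact zero_ne_one hζp

lemma conj_zeta (hp : 0 < p) (hζp : ζ ^ p = 1) :
    (starRingEnd ℂ) ζ = ζ ^ (p - 1) := by
  have h0 := zeta_ne_zero hp hζp
  have h1 : ζ * (starRingEnd ℂ) ζ = 1 := by
    rw [Complex.mul_conj]
    norm_cast
    rw [Complex.normSq_eq_norm_sq, abs_zeta hp hζp]; norm_num
  have h2 : ζ * ζ ^ (p - 1) = 1 := by
    rw [← pow_succ']
    have : p - 1 + 1 = p := by omega
    rw [this, hζp]
  exact mul_left_cancel₀ h0 (h1.trans h2.symm)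

lemma inv_zeta (hp : 0 < p) (hζp : ζ ^ p = 1) : ζ⁻¹ = ζ ^ (p - 1) := by
  have h2 : ζ * ζ ^ (p - 1) = 1 := by
    rw [← pow_succ']
    have : p - 1 + 1 = p := by omega
    rw [this, hζp]
  field_simp [zeta_ne_zero hp hζp] at h2 ⊢
  rw [← h2]

lemma zeta_mem : ζ ∈ zRing ζ := Subring.subset_closure rfl

lemma theta_mem : ζ + ζ⁻¹ ∈ zRealRing ζ := Subring.subset_closure rfl

lemma conj_mem_zRing (hp : 0 < p) (hζp : ζ ^ p = 1) {x : ℂ} (hx : x ∈ zRing ζ) :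
    (starRingEnd ℂ) x ∈ zRing ζ := by
  induction hx using Subring.closure_induction with
  | mem y hy =>
    obtain rfl : y = ζ := hy
    rw [conj_zeta hp hζp]
    exact pow_mem zeta_mem _
  | zero => rw [map_zero]; exact zero_mem _
  | one => rw [map_one]; exact one_mem _
  | add x y _ _ ihx ihy => rw [map_add]; exact add_mem ihx ihy
  | neg x _ ihx => rw [map_neg]; exact neg_mem ihx
  | mul x y _ _ ihx ihy => rw [map_mul]; exact mul_mem ihx ihy

lemma conj_fix_zRealRing (hp : 0 < p) (hζp : ζ ^ p = 1) {x : ℂ} (hx : x ∈ zRealRing ζ) :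
    (starRingEnd ℂ) x = x := by
  induction hx using Subring.closure_induction with
  | mem y hy =>
    obtain rfl : y = ζ + ζ⁻¹ := hy
    rw [map_add, conj_zeta hp hζp, ← inv_zeta hp hζp, map_inv₀, conj_zeta hp hζp,
      ← inv_zeta hp hζp, inv_inv, add_comm]
  | zero => exact map_zero _
  | one => exact map_one _
  | add x y _ _ ihx ihy => rw [map_add, ihx, ihy]
  | neg x _ ihx => rw [map_neg, ihx]
  | mul x y _ _ ihx ihy => rw [map_mul, ihx, ihy]

lemma exists_decomp (hp : 0 < p) (hζp : ζ ^ p = 1) {x : ℂ} (hx : x ∈ zRing ζ) :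
    ∃ a b : ℂ, a ∈ zRealRing ζ ∧ b ∈ zRealRing ζ ∧ x = a + b * ζ := by
  have h0 := zeta_ne_zero hp hζp
  induction hx using Subring.closure_induction with
  | mem y hy =>
    obtain rfl : y = ζ := hy
    exact ⟨0, 1, zero_mem _, one_mem _, by ring⟩
  | zero => exact ⟨0, 0, zero_mem _, zero_mem _, by ring⟩
  | one => exact ⟨1, 0, one_mem _, zero_mem _, by ring⟩
  | add x y _ _ ihx ihy =>
    obtain ⟨a, b, ha, hb, rfl⟩ := ihx
    obtain ⟨c, d, hc, hd, rfl⟩ := ihy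
    exact ⟨a + c, b + d, add_mem ha hc, add_mem hb hd, by ring⟩
  | neg x _ ihx =>
    obtain ⟨a, b, ha, hb, rfl⟩ := ihx
    exact ⟨-a, -b, neg_mem ha, neg_mem hb, by ring⟩
  | mul x y _ _ ihx ihy =>
    obtain ⟨a, b, ha, hb, rfl⟩ := ihx
    obtain ⟨c, d, hc, hd, rfl⟩ := ihy
    refine ⟨a * c - b * d, a * d + b * c + b * d * (ζ + ζ⁻¹),
      sub_mem (mul_mem ha hc) (mul_mem hb hd),
      add_mem (add_mem (mul_mem ha hd) (mul_mem hb hc)) (mul_mem (mul_mem hb hd) theta_mem), ?_⟩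
    field_simp
    ring

lemma mem_zRealRing_of_conj_fix (hp : p.Prime) (hζ : IsPrimitiveRoot ζ p) (hodd : Odd p)
    {x : ℂ} (hx : x ∈ zRing ζ) (hc : (starRingEnd ℂ) x = x) : x ∈ zRealRing ζ := by
  have hζp : ζ ^ p = 1 := hζ.pow_eq_one
  have hp3 : 3 ≤ p := by
    rcases hodd with ⟨k, hk⟩
    have := hp.two_le; omega
  obtain ⟨a, b, ha, hb, rfl⟩ := exists_decomp hp.pos hζp hx
  have hca := conj_fix_zRealRing hp.pos hζp ha
  have hcb := conj_fix_zRealRing hp.pos hζp hb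
  rw [map_add, map_mul, hca, hcb] at hc
  have hbz : b * ((starRingEnd ℂ) ζ - ζ) = 0 := by linear_combination hc
  rcases mul_eq_zero.1 hbz with hb0 | hz
  · rw [hb0]; simpa using ha
  · exfalso
    have hzz : (starRingEnd ℂ) ζ = ζ := by linear_combination hz
    rw [conj_zeta hp.pos hζp] at hzz
    have h2 : ζ ^ 2 = 1 := by
      have : ζ * ζ ^ (p - 1) = ζ * ζ := by rw [hzz]
      have hpow : ζ * ζ ^ (p - 1) = 1 := by
        rw [← pow_succ']
        have : p - 1 + 1 = p := by omega
        rw [this, hζp]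
      rw [hpow] at this
      rw [pow_two, ← this]
    exact hζ.pow_ne_one_of_pos_of_lt (by norm_num) (by omega) h2

lemma exists_poly {x : ℂ} (hx : x ∈ zRing ζ) : ∃ g : ℤ[X], aeval ζ g = x := by
  induction hx using Subring.closure_induction with
  | mem y hy => obtain rfl : y = ζ := hy; exact ⟨X, by simp⟩
  | zero => exact ⟨0, by simp⟩
  | one => exact ⟨1, by simp⟩
  | add x y _ _ ihx ihy =>
    obtain ⟨g, rfl⟩ := ihx; obtain ⟨h, rfl⟩ := ihy; exact ⟨g + h, by simp⟩
  | neg x _ ihx => obtain ⟨g, rfl⟩ := ihx; exact ⟨-g, by simp⟩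
  | mul x y _ _ ihx ihy =>
    obtain ⟨g, rfl⟩ := ihx; obtain ⟨h, rfl⟩ := ihy; exact ⟨g * h, by simp⟩

lemma isIntegral_mem (hp : 0 < p) (hζp : ζ ^ p = 1) {x : ℂ} (hx : x ∈ zRing ζ) :
    IsIntegral ℤ x := by
  induction hx using Subring.closure_induction with
  | mem y hy =>
    obtain rfl : y = ζ := hy
    exact ⟨X ^ p - 1, by simpa using monic_X_pow_sub_C (1 : ℤ) hp.ne', by simp [hζp]⟩
  | zero => exact isIntegral_zero
  | one => exact isIntegral_one
  | add x y _ _ ihx ihy => exact ihx.add ihy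
  | neg x _ ihx => exact ihx.neg
  | mul x y _ _ ihx ihy => exact ihx.mul ihy

lemma two_not_dvd (hp : p.Prime) (hodd : Odd p) (hζ : IsPrimitiveRoot ζ p)
    {y : ℂ} (hy : y ∈ zRing ζ) : (2 : ℂ) ≠ (1 - ζ) * y := by
  intro h
  haveI : Fact p.Prime := ⟨hp⟩
  have hp3 : 3 ≤ p := by rcases hodd with ⟨k, hk⟩; have := hp.two_le; omega
  obtain ⟨g, hg⟩ := exists_poly hy
  set q : ℤ[X] := C 2 - (1 - X) * g with hq
  have haq : aeval ζ q = 0 := by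
    simp only [hq, map_sub, map_mul, map_one, aeval_C, aeval_X, hg, map_ofNat, algebraMap_int_eq,
      eq_intCast]
    push_cast
    linear_combination h
  have hmin : cyclotomic p ℤ = minpoly ℤ ζ := cyclotomic_eq_minpoly hζ hp.pos
  have hdvd : minpoly ℤ ζ ∣ q := minpoly.isIntegrallyClosed_dvd (hζ.isIntegral hp.pos) haq
  rw [← hmin] at hdvd
  obtain ⟨h', hh⟩ := hdvd
  have := congrArg (Polynomial.eval (1 : ℤ)) hh
  simp only [hq, eval_sub, eval_mul, eval_one, eval_C, eval_X, sub_self, zero_mul,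
    sub_zero, eval_one_cyclotomic_prime] at this
  have hpdvd : (p : ℤ) ∣ 2 := ⟨h'.eval 1, this⟩
  have := Int.le_of_dvd (by norm_num) hpdvd
  omega

lemma geom_aux (k : ℕ) : (1 - ζ) * (∑ i ∈ Finset.range k, ζ ^ i) = 1 - ζ ^ k := by
  have := geom_sum_mul ζ k
  linear_combination -this

lemma one_sub_pow_mem (k : ℕ) : ∃ y ∈ zRing ζ, 1 - ζ ^ k = (1 - ζ) * y :=
  ⟨∑ i ∈ Finset.range k, ζ ^ i,
    sum_mem fun i _ => pow_mem zeta_mem i, (geom_aux k).symm⟩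

lemma conj_sub_mem (hp2 : 2 ≤ p) (hζp : ζ ^ p = 1) {x : ℂ} (hx : x ∈ zRing ζ) :
    ∃ y ∈ zRing ζ, (starRingEnd ℂ) x - x = (1 - ζ) * y := by
  have hp : 0 < p := by omega
  induction hx using Subring.closure_induction with
  | mem z hz =>
    rw [Set.eq_of_mem_singleton hz]
    refine ⟨-(ζ * ∑ i ∈ Finset.range (p - 2), ζ ^ i),
      neg_mem (mul_mem zeta_mem (sum_mem fun i _ => pow_mem zeta_mem i)), ?_⟩
    rw [conj_zeta hp hζp]
    have hg := geom_aux (ζ := ζ) (p - 2)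
    have hpe : ζ * ζ ^ (p - 2) = ζ ^ (p - 1) := by
      rw [← pow_succ']
      congr 1
      omega
    linear_combination ζ * hg - hpe
  | zero => exact ⟨0, zero_mem _, by simp⟩
  | one => exact ⟨0, zero_mem _, by simp⟩
  | add x y _ _ ihx ihy =>
    obtain ⟨a, ha, hha⟩ := ihx; obtain ⟨b, hb, hhb⟩ := ihy
    exact ⟨a + b, add_mem ha hb, by rw [map_add]; linear_combination hha + hhb⟩
  | neg x _ ihx =>
    obtain ⟨a, ha, hha⟩ := ihx
    exact ⟨-a, neg_mem ha, by rw [map_neg]; linear_combination -hha⟩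
  | mul x y hxm _ ihx ihy =>
    obtain ⟨a, ha, hha⟩ := ihx; obtain ⟨b, hb, hhb⟩ := ihy
    refine ⟨(starRingEnd ℂ) x * b + y * a,
      add_mem (mul_mem (conj_mem_zRing hp hζp hxm) hb) (mul_mem (by assumption) ha), ?_⟩
    rw [map_mul]
    linear_combination (starRingEnd ℂ) x * hhb + y * hha

open IntermediateField in
lemma alpha_eq (hp : p.Prime) (hodd : Odd p) (hζ : IsPrimitiveRoot ζ p)
    {e e' : ℂ} (he : e ∈ zRing ζ) (he' : e' ∈ zRing ζ) (h1 : e * e' = 1) :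
    ∃ r : ℕ, r < p ∧ (e * (starRingEnd ℂ) e' = ζ ^ r ∨ e * (starRingEnd ℂ) e' = -ζ ^ r) := by
  haveI : Fact p.Prime := ⟨hp⟩
  have hp0 : 0 < p := hp.pos
  have hζp : ζ ^ p = 1 := hζ.pow_eq_one
  have hconjζ : (starRingEnd ℂ) ζ = ζ ^ (p - 1) := conj_zeta hp0 hζp
  have conj_mem : ∀ {x : ℂ}, x ∈ zRing ζ → (starRingEnd ℂ) x ∈ zRing ζ :=
    fun hx => conj_mem_zRing hp0 hζp hx
  have int_mem : ∀ {x : ℂ}, x ∈ zRing ζ → IsIntegral ℤ x :=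
    fun hx => isIntegral_mem hp0 hζp hx
  set n : ℕ+ := ⟨p, hp0⟩ with hn
  have hζ' : IsPrimitiveRoot ζ (n : ℕ) := hζ
  set K : IntermediateField ℚ ℂ := ℚ⟮ζ⟯ with hK
  have hζK : ζ ∈ K := IntermediateField.mem_adjoin_simple_self ℚ ζ
  have hRK : ∀ {x : ℂ}, x ∈ zRing ζ → x ∈ K := by
    intro x hx
    induction hx using Subring.closure_induction with
    | mem y hy => rw [Set.eq_of_mem_singleton hy]; exact hζK
    | zero => exact zero_mem _
    | one => exact one_mem _
    | add x y _ _ ihx ihy => exact add_mem ihx ihy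
    | neg x _ ihx => exact neg_mem ihx
    | mul x y _ _ ihx ihy => exact mul_mem ihx ihy
  set zK : K := ⟨ζ, hζK⟩ with hzKdef
  have hzK : IsPrimitiveRoot zK n := by
    apply IsPrimitiveRoot.coe_submonoidClass_iff.1
    exact hζ'
  have hintQ : IsIntegral ℚ ζ := (int_mem (Subring.subset_closure rfl)).tower_top
  haveI cyc : IsCyclotomicExtension {(n : ℕ)} ℚ K := by
    have H := IntermediateField.adjoin_simple_toSubalgebra_of_isAlgebraic hintQ.isAlgebraic
    refine IsCyclotomicExtension.equiv _ _ _ (h := ?_) (.refl : K.toSubalgebra ≃ₐ[ℚ] _)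
    rw [hK, H]
    exact hζ'.adjoin_isCyclotomicExtension ℚ
  haveI : NumberField K := IsCyclotomicExtension.numberField {(n : ℕ)} ℚ K
  haveI : IsScalarTower ℤ K ℂ := IsScalarTower.of_algebraMap_eq fun x => by
    simp [map_intCast]
  set eK : K := ⟨e, hRK he⟩ with heK
  set e'K : K := ⟨e', hRK he'⟩ with he'K
  set ceK' : K := ⟨(starRingEnd ℂ) e', hRK (conj_mem he')⟩ with hceK'
  set α : K := eK * ceK' with hα
  have hee' : eK * e'K = 1 := Subtype.ext (by push_cast; exact h1)
  have hintα : IsIntegral ℤ α := by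
    rw [← isIntegral_algebraMap_iff (R := ℤ) (A := K) (B := ℂ)
      (algebraMap K ℂ).injective]
    show IsIntegral ℤ ((α : ℂ))
    exact int_mem (mul_mem he (conj_mem he'))
  have key : ∀ (φ : K →+* ℂ) (z : ℂ) (hz : z ∈ zRing ζ), ∀ a b : K,
      (a : ℂ) = z → (b : ℂ) = (starRingEnd ℂ) z → φ b = (starRingEnd ℂ) (φ a) := by
    intro φ
    have hφζ : (φ zK) ^ p = 1 := by
      rw [← map_pow]
      have hone : zK ^ p = 1 := Subtype.ext (by push_cast; exact hζp)
      rw [hone, map_one]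
    haveI : NeZero p := ⟨hp0.ne'⟩
    obtain ⟨i, -, hi⟩ := hζ.eq_pow_of_pow_eq_one hφζ
    intro z hz
    induction hz using Subring.closure_induction with
    | mem y hy =>
      obtain rfl : y = ζ := hy
      intro a b ha hb
      have haz : a = zK := Subtype.ext (by simp [ha, hzKdef])
      have hbz : b = zK ^ (p - 1) := Subtype.ext (by push_cast; rw [hb, hconjζ])
      rw [haz, hbz, map_pow, ← hi, map_pow, hconjζ, ← pow_mul, ← pow_mul, Nat.mul_comm]
    | zero =>
      intro a b ha hb
      have haz : a = 0 := Subtype.ext (by simp [ha])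
      have hbz : b = 0 := Subtype.ext (by simp [hb])
      rw [haz, hbz]; simp
    | one =>
      intro a b ha hb
      have haz : a = 1 := Subtype.ext (by simp [ha])
      have hbz : b = 1 := Subtype.ext (by simp [hb])
      rw [haz, hbz]; simp
    | add x y hxm hym ihx ihy =>
      intro a b ha hb
      have hax : a = ⟨x, hRK hxm⟩ + ⟨y, hRK hym⟩ := Subtype.ext (by simp [ha])
      have hbx : b = ⟨(starRingEnd ℂ) x, hRK (conj_mem hxm)⟩
          + ⟨(starRingEnd ℂ) y, hRK (conj_mem hym)⟩ := Subtype.ext (by simp [hb])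
      rw [hax, hbx, map_add, map_add, map_add,
        ihx ⟨x, hRK hxm⟩ ⟨(starRingEnd ℂ) x, hRK (conj_mem hxm)⟩ rfl rfl,
        ihy ⟨y, hRK hym⟩ ⟨(starRingEnd ℂ) y, hRK (conj_mem hym)⟩ rfl rfl]
    | neg x hxm ihx =>
      intro a b ha hb
      have hax : a = -⟨x, hRK hxm⟩ := Subtype.ext (by simp [ha])
      have hbx : b = -⟨(starRingEnd ℂ) x, hRK (conj_mem hxm)⟩ :=
        Subtype.ext (by simp [hb])
      rw [hax, hbx, map_neg, map_neg, map_neg,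
        ihx ⟨x, hRK hxm⟩ ⟨(starRingEnd ℂ) x, hRK (conj_mem hxm)⟩ rfl rfl]
    | mul x y hxm hym ihx ihy =>
      intro a b ha hb
      have hax : a = ⟨x, hRK hxm⟩ * ⟨y, hRK hym⟩ := Subtype.ext (by simp [ha])
      have hbx : b = ⟨(starRingEnd ℂ) x, hRK (conj_mem hxm)⟩
          * ⟨(starRingEnd ℂ) y, hRK (conj_mem hym)⟩ := Subtype.ext (by simp [hb])
      rw [hax, hbx, map_mul, map_mul, map_mul,
        ihx ⟨x, hRK hxm⟩ ⟨(starRingEnd ℂ) x, hRK (conj_mem hxm)⟩ rfl rfl,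
        ihy ⟨y, hRK hym⟩ ⟨(starRingEnd ℂ) y, hRK (conj_mem hym)⟩ rfl rfl]
  have hnorm : ∀ φ : K →+* ℂ, ‖φ α‖ = 1 := by
    intro φ
    rw [hα, map_mul, key φ e' he' e'K ceK' rfl rfl, norm_mul, RCLike.norm_conj,
      ← norm_mul, ← map_mul, hee', map_one, norm_one]
  obtain ⟨m, hm0, hm⟩ := NumberField.Embeddings.pow_eq_one_of_norm_eq_one K ℂ hintα hnorm
  have hfin : IsOfFinOrder α := isOfFinOrder_iff_pow_eq_one.2 ⟨m, hm0, hm⟩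
  obtain ⟨r, hr, hcase⟩ := hzK.exists_pow_or_neg_mul_pow_of_isOfFinOrder (show Odd ((n : ℕ+) : ℕ) from hodd) hfin
  refine ⟨r, hr, ?_⟩
  rcases hcase with h | h
  · left
    have := congrArg (Subtype.val) h
    push_cast at this
    exact this
  · right
    have := congrArg (Subtype.val) h
    push_cast at this
    exact this

end KummerAux


/-- **Kummer's lemma on units.** For an odd prime `p` and a primitive
`p`-th root of unity `ζ ∈ ℂ`, every unit of `ℤ[ζ]` can be written as `ζ^j · u` with
`0 ≤ j < p` and `u` a unit of the real subring `ℤ[ζ + ζ⁻¹]`. -/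
theorem statement2 (p : ℕ) (hp : p.Prime) (hodd : Odd p) (ζ : ℂ)
    (hζ : IsPrimitiveRoot ζ p) :
    ∀ f : (zRing ζ)ˣ, ∃ j : ℕ, j < p ∧ ∃ u : (zRealRing ζ)ˣ,
      ((f : zRing ζ) : ℂ) = ζ ^ j * ((u : zRealRing ζ) : ℂ) := by
  intro f
  have hp0 : 0 < p := hp.pos
  have hζp : ζ ^ p = 1 := hζ.pow_eq_one
  have hconjζ : (starRingEnd ℂ) ζ = ζ ^ (p - 1) := KummerAux.conj_zeta hp0 hζp
  obtain ⟨t, hpt⟩ : ∃ t, p = 2 * t + 3 := by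
    rcases hodd with ⟨w, hw⟩
    have := hp.two_le
    exact ⟨w - 1, by omega⟩
  set e : ℂ := ((f : zRing ζ) : ℂ) with hedef
  set e' : ℂ := (((f⁻¹ : (zRing ζ)ˣ) : zRing ζ) : ℂ) with he'def
  have he : e ∈ zRing ζ := SetLike.coe_mem _
  have he' : e' ∈ zRing ζ := SetLike.coe_mem _
  have h1 : e * e' = 1 := by
    have h0 : ((f : zRing ζ) * ((f⁻¹ : (zRing ζ)ˣ) : zRing ζ) : zRing ζ) = 1 := f.mul_inv
    have := congrArg Subtype.val h0
    push_cast at this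
    exact this
  have hce : (starRingEnd ℂ) e * (starRingEnd ℂ) e' = 1 := by
    rw [← map_mul, h1, map_one]
  have hmodpow : ∀ a : ℕ, ζ ^ a = ζ ^ (a % p) := by
    intro a
    conv_lhs => rw [← Nat.div_add_mod a p]
    rw [pow_add, pow_mul, hζp, one_pow, one_mul]
  have hpoweq : ∀ a b : ℕ, a % p = b % p → ζ ^ a = ζ ^ b := fun a b h => by
    rw [hmodpow a, hmodpow b, h]
  obtain ⟨r, hr, hcase⟩ := KummerAux.alpha_eq hp hodd hζ he he' h1
  rcases hcase with hpos | hneg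
  · -- positive case : e * conj e' = ζ ^ r
    set j := (r * (t + 2)) % p with hj
    have hjlt : j < p := Nat.mod_lt _ hp0
    have h2j : ζ ^ (2 * j) = ζ ^ r := by
      apply hpoweq
      have e1 : 2 * j ≡ 2 * (r * (t + 2)) [MOD p] := by
        rw [hj]; exact (Nat.mod_modEq _ p).mul_left 2
      have e2 : 2 * (r * (t + 2)) = r + r * p := by rw [hpt]; ring
      have e3 : r + r * p ≡ r [MOD p] := by show (r + r * p) % p = r % p; exact Nat.add_mul_mod_self_right r r p
      have e4 : 2 * (r * (t + 2)) ≡ r [MOD p] := by rw [e2]; exact e3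
      exact e1.trans e4
    have heα : e = ζ ^ (2 * j) * (starRingEnd ℂ) e := by
      rw [h2j]
      linear_combination (starRingEnd ℂ) e * hpos - e * hce
    have hce' : (starRingEnd ℂ) e' = ζ ^ (2 * j) * e' := by
      rw [h2j]
      linear_combination e' * hpos - (starRingEnd ℂ) e' * h1
    set m := j * (2 * t + 2) with hm
    set u := ζ ^ m * e with hu
    set v := ζ ^ j * e' with hv
    have hum : u ∈ zRing ζ := mul_mem (pow_mem KummerAux.zeta_mem m) he
    have hvm : v ∈ zRing ζ := mul_mem (pow_mem KummerAux.zeta_mem j) he'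
    have hp1 : p - 1 = 2 * t + 2 := by omega
    rw [hp1] at hconjζ
    have huv : u * v = 1 := by
      rw [hu, hv]
      have hstep : ζ ^ m * e * (ζ ^ j * e') = ζ ^ (m + j) * (e * e') := by
        rw [pow_add]; ring
      rw [hstep, h1, mul_one, show m + j = p * j by rw [hm, hpt]; ring, pow_mul, hζp, one_pow]
    have hcu : (starRingEnd ℂ) u = u := by
      rw [hu, map_mul, map_pow, hconjζ, ← pow_mul]
      have h5 : ζ ^ m * e = ζ ^ (m + 2 * j) * (starRingEnd ℂ) e := by
        rw [pow_add]
        conv_lhs => rw [heα]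
        ring
      rw [h5]
      congr 1
      apply hpoweq
      have ea : (2 * t + 2) * m = j + (j * (2 * t + 1)) * p := by rw [hm, hpt]; ring
      have eb : m + 2 * j = j + j * p := by rw [hm, hpt]; ring
      rw [ea, eb, Nat.add_mul_mod_self_right, Nat.add_mul_mod_self_right]
    have hcv : (starRingEnd ℂ) v = v := by
      rw [hv, map_mul, map_pow, hconjζ, ← pow_mul, hce', ← mul_assoc, ← pow_add]
      congr 1
      apply hpoweq
      have ea : (2 * t + 2) * j + 2 * j = j + j * p := by rw [hpt]; ring
      rw [ea, Nat.add_mul_mod_self_right]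
    have hur : u ∈ zRealRing ζ := KummerAux.mem_zRealRing_of_conj_fix hp hζ hodd hum hcu
    have hvr : v ∈ zRealRing ζ := KummerAux.mem_zRealRing_of_conj_fix hp hζ hodd hvm hcv
    refine ⟨j, hjlt, ⟨⟨u, hur⟩, ⟨v, hvr⟩, Subtype.ext (by push_cast; exact huv),
      Subtype.ext (by push_cast; rw [mul_comm]; exact huv)⟩, ?_⟩
    show e = ζ ^ j * u
    rw [hu, ← mul_assoc, ← pow_add,
      show j + m = p * j by rw [hm, hpt]; ring, pow_mul, hζp, one_pow, one_mul]
  · -- negative case : contradiction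
    exfalso
    have he2 : e = -ζ ^ r * (starRingEnd ℂ) e := by
      linear_combination (starRingEnd ℂ) e * hneg - e * hce
    obtain ⟨y₁, hy₁R, hy₁⟩ := KummerAux.conj_sub_mem (show 2 ≤ p by omega) hζp he
    obtain ⟨y₂, hy₂R, hy₂⟩ := KummerAux.one_sub_pow_mem (ζ := ζ) r
    refine KummerAux.two_not_dvd hp hodd hζ
      (y := (y₂ * (starRingEnd ℂ) e - y₁) * e')
      (mul_mem (sub_mem (mul_mem hy₂R (KummerAux.conj_mem_zRing hp0 hζp he)) hy₁R) he') ?_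
    linear_combination (e' * (starRingEnd ℂ) e) * hy₂ - e' * hy₁ + e' * he2 - 2 * h1
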